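/- Let g : ℝ → ℝ be continuous with g(r)·sign(r) > 0 for all |r| > γ (for some γ > 0), and let φ ∈ X_{σ0} solve the stationary problem 𝔄_σ φ + g(φ) = 0 in X_{σ0}' with g(φ) ∈ L²(Ω). Then φ ∈ L^∞(Ω), and in fact ess sup_Ω |φ| ≤ γ. -/

import Mathlib

open MeasureTheory
open scoped ENNReal

private lemma div_le_div_nonneg_denom {a b c : ℝ} (h : a ≤ b) (hc : 0 ≤ c) :
    a / c ≤ b / c := by
  rcases hc.eq_or_lt with rfl | hc
  · simp
  · exact (div_le_div_iff_of_pos_right hc).2 h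

private lemma abs_min_sub_min_le (a b c : ℝ) : |min a c - min b c| ≤ |a - b| := by
  have := abs_min_sub_min_le_max a c b c
  simpa using this

private lemma key_lemma (N : ℕ) (Ω : Set (Fin N → ℝ))
    (hΩmeas : MeasurableSet Ω) (hΩbdd : Bornology.IsBounded Ω)
    (σ Cσ : ℝ) (hσ0 : 0 < σ) (hCσ : 0 < Cσ)
    (g : ℝ → ℝ) (hgcont : Continuous g)
    (φ : (Fin N → ℝ) → ℝ) (hφm : Measurable φ)
    (hφ0 : ∀ᵐ x ∂volume, x ∉ Ω → φ x = 0)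
    (hφX : (∫⁻ x, ∫⁻ y,
        ENNReal.ofReal (|φ x - φ y| ^ 2 / ‖x - y‖ ^ ((N : ℝ) + 2 * σ)) ∂volume ∂volume) < ⊤)
    (hgφ : Integrable (fun x => (g (φ x)) ^ 2) (volume.restrict Ω))
    (heq : ∀ ζ : (Fin N → ℝ) → ℝ, Measurable ζ →
      (∀ᵐ x ∂volume, x ∉ Ω → ζ x = 0) →
      (∫⁻ x, ∫⁻ y,
        ENNReal.ofReal (|ζ x - ζ y| ^ 2 / ‖x - y‖ ^ ((N : ℝ) + 2 * σ)) ∂volume ∂volume) < ⊤ →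
      Integrable (fun q : (Fin N → ℝ) × (Fin N → ℝ) =>
        (φ q.1 - φ q.2) * (ζ q.1 - ζ q.2) / ‖q.1 - q.2‖ ^ ((N : ℝ) + 2 * σ))
        (volume.prod volume) →
      Integrable (fun x => g (φ x) * ζ x) (volume.restrict Ω) →
      (Cσ / 2) * (∫ q : (Fin N → ℝ) × (Fin N → ℝ),
          (φ q.1 - φ q.2) * (ζ q.1 - ζ q.2) / ‖q.1 - q.2‖ ^ ((N : ℝ) + 2 * σ)
          ∂(volume.prod volume))
        + ∫ x in Ω, g (φ x) * ζ x ∂volume = 0)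
    (h : ℝ → ℝ) (hhcont : Continuous h) (hhm : Monotone h) (hh0 : h 0 = 0)
    (hhb : ∀ t, |h t| ≤ 1) (hlip : ∀ a b, |h a - h b| ≤ |a - b|)
    (hpos : ∀ r, h r ≠ 0 → 0 < g r * h r) :
    ∀ᵐ x ∂volume.restrict Ω, h (φ x) = 0 := by
  set e : ℝ := (N : ℝ) + 2 * σ with he
  have he0 : 0 ≤ e := by positivity
  set ζ : (Fin N → ℝ) → ℝ := fun x => h (φ x) with hζ
  have hζm : Measurable ζ := hhcont.measurable.comp hφm
  have hζ0 : ∀ᵐ x ∂volume, x ∉ Ω → ζ x = 0 :=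
    hφ0.mono fun x hx hxΩ => by simp [hζ, hx hxΩ, hh0]
  -- pointwise bound on increments
  have hinc : ∀ a b : ℝ, |h a - h b| ^ 2 ≤ |a - b| ^ 2 := fun a b =>
    pow_le_pow_left₀ (abs_nonneg _) (hlip a b) 2
  have hζX : (∫⁻ x, ∫⁻ y,
      ENNReal.ofReal (|ζ x - ζ y| ^ 2 / ‖x - y‖ ^ e) ∂volume ∂volume) < ⊤ := by
    refine lt_of_le_of_lt ?_ hφX
    refine lintegral_mono fun x => lintegral_mono fun y => ENNReal.ofReal_le_ofReal ?_
    exact div_le_div_nonneg_denom (hinc _ _) (Real.rpow_nonneg (norm_nonneg _) _)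
  -- integrability of the bilinear integrand
  have hdm : Measurable fun q : (Fin N → ℝ) × (Fin N → ℝ) => ‖q.1 - q.2‖ ^ e :=
    ((continuous_fst.sub continuous_snd).norm.rpow_const fun _ => Or.inr he0).measurable
  have hFm : Measurable fun q : (Fin N → ℝ) × (Fin N → ℝ) =>
      (φ q.1 - φ q.2) * (ζ q.1 - ζ q.2) / ‖q.1 - q.2‖ ^ e :=
    (((hφm.comp measurable_fst).sub (hφm.comp measurable_snd)).mul
      ((hζm.comp measurable_fst).sub (hζm.comp measurable_snd))).div hdm
  have hbound : ∀ q : (Fin N → ℝ) × (Fin N → ℝ),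
      ‖(φ q.1 - φ q.2) * (ζ q.1 - ζ q.2) / ‖q.1 - q.2‖ ^ e‖
        ≤ |φ q.1 - φ q.2| ^ 2 / ‖q.1 - q.2‖ ^ e := by
    intro q
    have hd : 0 ≤ ‖q.1 - q.2‖ ^ e := Real.rpow_nonneg (norm_nonneg _) _
    rw [Real.norm_eq_abs, abs_div, abs_of_nonneg hd, abs_mul]
    refine div_le_div_nonneg_denom ?_ hd
    calc |φ q.1 - φ q.2| * |ζ q.1 - ζ q.2| ≤ |φ q.1 - φ q.2| * |φ q.1 - φ q.2| :=
          mul_le_mul_of_nonneg_left (hlip _ _) (abs_nonneg _)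
      _ = |φ q.1 - φ q.2| ^ 2 := (sq _).symm
  have hFint : Integrable (fun q : (Fin N → ℝ) × (Fin N → ℝ) =>
      (φ q.1 - φ q.2) * (ζ q.1 - ζ q.2) / ‖q.1 - q.2‖ ^ e) (volume.prod volume) := by
    refine ⟨hFm.aestronglyMeasurable, ?_⟩
    rw [HasFiniteIntegral]
    have hGm : Measurable fun q : (Fin N → ℝ) × (Fin N → ℝ) =>
        ENNReal.ofReal (|φ q.1 - φ q.2| ^ 2 / ‖q.1 - q.2‖ ^ e) :=
      ((((hφm.comp measurable_fst).sub (hφm.comp measurable_snd)).abs.pow_const 2).div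
        hdm).ennreal_ofReal
    calc (∫⁻ q, ‖(φ q.1 - φ q.2) * (ζ q.1 - ζ q.2) / ‖q.1 - q.2‖ ^ e‖₊
          ∂(volume.prod volume))
        ≤ ∫⁻ q, ENNReal.ofReal (|φ q.1 - φ q.2| ^ 2 / ‖q.1 - q.2‖ ^ e)
            ∂(volume.prod volume) := by
          refine lintegral_mono fun q => ?_
          rw [← ENNReal.ofReal_coe_nnreal, coe_nnnorm]
          exact ENNReal.ofReal_le_ofReal (hbound q)
      _ = ∫⁻ x, ∫⁻ y, ENNReal.ofReal (|φ x - φ y| ^ 2 / ‖x - y‖ ^ e) ∂volume ∂volume :=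
          MeasureTheory.lintegral_prod _ hGm.aemeasurable
      _ < ⊤ := hφX
  -- integrability of g(φ) ζ
  have hΩfin : volume Ω < ⊤ := hΩbdd.measure_lt_top
  have hgζint : Integrable (fun x => g (φ x) * ζ x) (volume.restrict Ω) := by
    have hb : Integrable (fun x => (g (φ x)) ^ 2 + 1) (volume.restrict Ω) :=
      hgφ.add (integrableOn_const hΩfin.ne)
    refine hb.mono' ((hgcont.measurable.comp hφm).mul hζm).aestronglyMeasurable ?_
    refine Filter.Eventually.of_forall fun x => ?_
    rw [Real.norm_eq_abs, abs_mul]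
    have h1 : |ζ x| ≤ 1 := hhb _
    have h2 : |g (φ x)| ≤ (g (φ x)) ^ 2 + 1 := by nlinarith [sq_abs (g (φ x)), abs_nonneg (g (φ x))]
    nlinarith [abs_nonneg (g (φ x)), abs_nonneg (ζ x)]
  have hEQ := heq ζ hζm hζ0 hζX hFint hgζint
  -- B ≥ 0
  have hB : 0 ≤ ∫ q : (Fin N → ℝ) × (Fin N → ℝ),
      (φ q.1 - φ q.2) * (ζ q.1 - ζ q.2) / ‖q.1 - q.2‖ ^ e ∂(volume.prod volume) := by
    refine integral_nonneg fun q => ?_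
    refine div_nonneg ?_ (Real.rpow_nonneg (norm_nonneg _) _)
    rcases le_total (φ q.2) (φ q.1) with hle | hle
    · exact mul_nonneg (by linarith) (by simpa [hζ] using sub_nonneg.2 (hhm hle))
    · have h1 : ζ q.1 - ζ q.2 ≤ 0 := sub_nonpos.2 (hhm hle)
      nlinarith
  have hI0 : ∀ x, 0 ≤ g (φ x) * ζ x := by
    intro x
    by_cases hx : h (φ x) = 0
    · simp [hζ, hx]
    · exact le_of_lt (hpos _ hx)
  have hInn : 0 ≤ ∫ x in Ω, g (φ x) * ζ x ∂volume := integral_nonneg hI0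
  have hIle : (∫ x in Ω, g (φ x) * ζ x ∂volume) ≤ 0 := by nlinarith
  have hIzero : (∫ x in Ω, g (φ x) * ζ x ∂volume) = 0 := le_antisymm hIle hInn
  have := (integral_eq_zero_iff_of_nonneg hI0 hgζint).1 hIzero
  refine this.mono fun x hx => ?_
  by_contra hne
  exact (hpos (φ x) hne).ne' hx

/-- If `g` is continuous with `g(r)·sign(r) > 0` for `|r| > γ`, then any weak solution
`φ ∈ X_{σ0}` of the stationary problem `𝔄_σ φ + g(φ) = 0` (with `g(φ) ∈ L²(Ω)`) is
essentially bounded, with `ess sup_Ω |φ| ≤ γ`.  The equation is expressed in weak form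
through the (scaled) Gagliardo bilinear form tested against functions in `X_{σ0}`. -/
theorem stationary_solutions_bounded (N : ℕ) (hN : 0 < N) (Ω : Set (Fin N → ℝ))
    (hΩmeas : MeasurableSet Ω) (hΩbdd : Bornology.IsBounded Ω)
    (σ Cσ : ℝ) (hσ0 : 0 < σ) (hσ1 : σ < 1) (hCσ : 0 < Cσ)
    (g : ℝ → ℝ) (hgcont : Continuous g) (γ : ℝ) (hγ : 0 < γ)
    (hsign : ∀ r : ℝ, γ < |r| → 0 < g r * Real.sign r)
    (φ : (Fin N → ℝ) → ℝ) (hφm : Measurable φ)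
    (hφ0 : ∀ᵐ x ∂volume, x ∉ Ω → φ x = 0)
    (hφX : (∫⁻ x, ∫⁻ y,
        ENNReal.ofReal (|φ x - φ y| ^ 2 / ‖x - y‖ ^ ((N : ℝ) + 2 * σ)) ∂volume ∂volume) < ⊤)
    (hgφ : Integrable (fun x => (g (φ x)) ^ 2) (volume.restrict Ω))
    (heq : ∀ ζ : (Fin N → ℝ) → ℝ, Measurable ζ →
      (∀ᵐ x ∂volume, x ∉ Ω → ζ x = 0) →
      (∫⁻ x, ∫⁻ y,
        ENNReal.ofReal (|ζ x - ζ y| ^ 2 / ‖x - y‖ ^ ((N : ℝ) + 2 * σ)) ∂volume ∂volume) < ⊤ →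
      Integrable (fun q : (Fin N → ℝ) × (Fin N → ℝ) =>
        (φ q.1 - φ q.2) * (ζ q.1 - ζ q.2) / ‖q.1 - q.2‖ ^ ((N : ℝ) + 2 * σ))
        (volume.prod volume) →
      Integrable (fun x => g (φ x) * ζ x) (volume.restrict Ω) →
      (Cσ / 2) * (∫ q : (Fin N → ℝ) × (Fin N → ℝ),
          (φ q.1 - φ q.2) * (ζ q.1 - ζ q.2) / ‖q.1 - q.2‖ ^ ((N : ℝ) + 2 * σ)
          ∂(volume.prod volume))
        + ∫ x in Ω, g (φ x) * ζ x ∂volume = 0) :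
    ∀ᵐ x ∂volume.restrict Ω, |φ x| ≤ γ := by
  have hp := key_lemma N Ω hΩmeas hΩbdd σ Cσ hσ0 hCσ g hgcont φ hφm hφ0 hφX hgφ heq
    (fun t => min (max (t - γ) 0) 1)
    (((continuous_id.sub continuous_const).max continuous_const).min continuous_const)
    (fun a b hab => min_le_min (max_le_max (by linarith) le_rfl) le_rfl)
    (by show min (max ((0:ℝ) - γ) 0) 1 = 0; rw [zero_sub, max_eq_right (by linarith), min_eq_left (by norm_num)])
    (fun t => by
      have h0 : (0:ℝ) ≤ min (max (t - γ) 0) 1 := le_min (le_max_right _ _) one_pos.le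
      have h1 : min (max (t - γ) 0) 1 ≤ 1 := min_le_right _ _
      rw [abs_le]; exact ⟨by linarith, h1⟩)
    (fun a b => by
      calc |min (max (a - γ) 0) 1 - min (max (b - γ) 0) 1|
          ≤ |max (a - γ) 0 - max (b - γ) 0| := abs_min_sub_min_le _ _ 1
        _ ≤ |(a - γ) - (b - γ)| := abs_max_sub_max_le_abs _ _ _
        _ = |a - b| := by ring_nf)
    (fun r hne => by
      have hr : γ < r := by
        by_contra hc
        push_neg at hc
        exact hne (by show min (max (r - γ) 0) 1 = 0; rw [max_eq_right (by linarith), min_eq_left (by norm_num)])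
      have hh : 0 < min (max (r - γ) 0) 1 :=
        lt_min (lt_of_lt_of_le (by linarith) (le_max_left _ _)) one_pos
      have hg : 0 < g r := by
        have := hsign r (by rw [abs_of_pos (by linarith)]; exact hr)
        rwa [Real.sign_of_pos (by linarith), mul_one] at this
      exact mul_pos hg hh)
  have hm := key_lemma N Ω hΩmeas hΩbdd σ Cσ hσ0 hCσ g hgcont φ hφm hφ0 hφX hgφ heq
    (fun t => max (min (t + γ) 0) (-1))
    (((continuous_id.add continuous_const).min continuous_const).max continuous_const)
    (fun a b hab => max_le_max (min_le_min (by linarith) le_rfl) le_rfl)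
    (by show max (min ((0:ℝ) + γ) 0) (-1) = 0; rw [zero_add, min_eq_right (by linarith), max_eq_left (by norm_num)])
    (fun t => by
      have h0 : max (min (t + γ) 0) (-1) ≤ 0 := max_le (min_le_right _ _) (by norm_num)
      have h1 : (-1:ℝ) ≤ max (min (t + γ) 0) (-1) := le_max_right _ _
      rw [abs_le]; exact ⟨h1, by linarith⟩)
    (fun a b => by
      calc |max (min (a + γ) 0) (-1) - max (min (b + γ) 0) (-1)|
          ≤ |min (a + γ) 0 - min (b + γ) 0| := abs_max_sub_max_le_abs _ _ _
        _ ≤ |(a + γ) - (b + γ)| := abs_min_sub_min_le _ _ 0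
        _ = |a - b| := by ring_nf)
    (fun r hne => by
      have hr : r < -γ := by
        by_contra hc
        push_neg at hc
        exact hne (by show max (min (r + γ) 0) (-1) = 0; rw [min_eq_right (by linarith), max_eq_left (by norm_num)])
      have hh : max (min (r + γ) 0) (-1) < 0 :=
        max_lt (lt_of_le_of_lt (min_le_left _ _) (by linarith)) (by norm_num)
      have hg : g r < 0 := by
        have := hsign r (by rw [abs_of_neg (by linarith)]; linarith)
        rw [Real.sign_of_neg (by linarith)] at this
        nlinarith
      exact mul_pos_of_neg_of_neg hg hh)
  filter_upwards [hp, hm] with x h1 h2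
  replace h1 : min (max (φ x - γ) 0) 1 = 0 := h1
  replace h2 : max (min (φ x + γ) 0) (-1) = 0 := h2
  rw [abs_le]
  constructor
  · by_contra hc
    push_neg at hc
    have : max (min (φ x + γ) 0) (-1) < 0 :=
      max_lt (lt_of_le_of_lt (min_le_left _ _) (by linarith)) (by norm_num)
    rw [h2] at this
    exact lt_irrefl _ this
  · by_contra hc
    push_neg at hc
    have : 0 < min (max (φ x - γ) 0) 1 :=
      lt_min (lt_of_lt_of_le (by linarith) (le_max_left _ _)) one_pos
    rw [h1] at this
    exact lt_irrefl _ this
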